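/- Suppose the bipartite graph (U, V, E) is K_{2,2}-free, i.e., no two distinct u, u' ∈ U have two distinct common neighbors in V. Let u ∈ U and let D ⊆ U \ {u} be such that every v ∈ N(u) has a neighbor in D. Then |D| ≥ |N(u)|. (Property 4 of the kernel: if u is not selected, a distinct dominator is needed for each neighbor of u.) -/

import Mathlib

open Finset

/-- `D` dominates `V` in the bipartite graph with edge set `E`. -/
def Dominates {α : Type*} [DecidableEq α] (E : Finset (α × α)) (D V : Finset α) : Prop :=
  ∀ v ∈ V, ∃ u ∈ D, (u, v) ∈ E

/-- The bipartite graph `(U, V, E)` is `K_{2,2}`-free: no two distinct vertices of `U`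
have two distinct common neighbors in `V`. -/
def K22Free {α : Type*} [DecidableEq α] (U V : Finset α) (E : Finset (α × α)) : Prop :=
  ∀ u ∈ U, ∀ u' ∈ U, u ≠ u' → ∀ v ∈ V, ∀ v' ∈ V, v ≠ v' →
    ¬((u, v) ∈ E ∧ (u, v') ∈ E ∧ (u', v) ∈ E ∧ (u', v') ∈ E)

theorem stmt_12 {α : Type*} [DecidableEq α]
    (U V : Finset α) (hUV : Disjoint U V)
    (E : Finset (α × α)) (hE : E ⊆ U ×ˢ V)
    (hK : K22Free U V E)
    (u : α) (hu : u ∈ U)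
    (D : Finset α) (hDU : D ⊆ U) (huD : u ∉ D)
    (hdom : ∀ v ∈ V.filter (fun v => (u, v) ∈ E), ∃ d ∈ D, (d, v) ∈ E) :
    (V.filter (fun v => (u, v) ∈ E)).card ≤ D.card := by
  classical
  have hch : ∀ v ∈ V.filter (fun v => (u, v) ∈ E), ∃ d, d ∈ D ∧ (d, v) ∈ E := by
    intro v hv; obtain ⟨d, hd, hdv⟩ := hdom v hv; exact ⟨d, hd, hdv⟩
  choose f hf1 hf2 using hch
  apply Finset.card_le_card_of_injOn (fun v => if h : v ∈ V.filter (fun v => (u, v) ∈ E) then f v h else v)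
  · intro v hv; rw [Finset.mem_coe] at hv; simp only [hv, dif_pos]; exact hf1 v hv
  · intro v hv v' hv' heq
    rw [Finset.mem_coe] at hv hv'
    simp only [hv, hv', dif_pos] at heq
    by_contra hne
    have hvV := (Finset.mem_filter.mp hv).1
    have hv'V := (Finset.mem_filter.mp hv').1
    have huv := (Finset.mem_filter.mp hv).2
    have huv' := (Finset.mem_filter.mp hv').2
    have hd := hf2 v hv
    have hd' := hf2 v' hv'
    rw [heq] at hd
    have hdU : f v' hv' ∈ U := hDU (hf1 v' hv')
    have hne' : u ≠ f v' hv' := fun h => huD (h ▸ hf1 v' hv')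
    exact hK u hu (f v' hv') hdU hne' v hvV v' hv'V hne ⟨huv, huv', hd, hd'⟩
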